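/- Let 0 < α ≤ 1, N ≥ 3, 1 < p < (N+2+2α)/(N-2), let u_p be the positive radial solution of the Henon equation, and let Λ_{1,2}(p) be the first eigenvalue of -(r^{N-1}ψ')' + 2N r^{N-3} ψ = Λ p r^{N-1+α} u_p^{p-1} ψ with ψ(0)=0, ψ(1)=0 (the mode k=2 with μ₂ = 2N). Then Λ_{1,2}(p) > 1. -/

import Mathlib

open Set intervalIntegral MeasureTheory


lemma aux_cont_rpow {c : ℝ} (hc : 0 ≤ c) : Continuous fun x : ℝ => x ^ c :=
  Real.continuous_rpow_const hc

lemma aux_cont_upow {q : ℝ} (hq : 0 < q) (u : ℝ → ℝ) (hu : Continuous u) :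
    Continuous fun r => u r ^ q :=
  (Real.continuous_rpow_const hq.le).comp hu

lemma aux_mvt_rpow {pp x y : ℝ} (hy : 0 < y) (hxy : y ≤ x) (hp : 1 ≤ pp) :
    pp * y ^ (pp - 1) * (x - y) ≤ x ^ pp - y ^ pp := by
  rcases eq_or_lt_of_le hxy with rfl | hlt
  · simp
  · have hcont : ContinuousOn (fun t : ℝ => t ^ pp) (Icc y x) :=
      ((Real.continuous_rpow_const (by linarith : (0:ℝ) ≤ pp)).continuousOn)
    have hderiv : ∀ t ∈ Ioo y x,
        HasDerivAt (fun t : ℝ => t ^ pp) (pp * t ^ (pp - 1)) t := fun t ht =>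
      Real.hasDerivAt_rpow_const (Or.inl (by linarith [ht.1] : t ≠ 0))
    obtain ⟨c, hc, hceq⟩ := exists_hasDerivAt_eq_slope (fun t : ℝ => t ^ pp)
      (fun t => pp * t ^ (pp - 1)) hlt hcont hderiv
    have hcy : y ^ (pp - 1) ≤ c ^ (pp - 1) :=
      Real.rpow_le_rpow hy.le hc.1.le (by linarith)
    have hxys : 0 < x - y := by linarith
    have : pp * y ^ (pp - 1) ≤ pp * c ^ (pp - 1) := by nlinarith
    calc pp * y ^ (pp - 1) * (x - y) ≤ pp * c ^ (pp - 1) * (x - y) := by nlinarith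
    _ = x ^ pp - y ^ pp := by rw [hceq]; field_simp


set_option maxHeartbeats 1000000 in
lemma mainE (N : ℕ) (u : ℝ → ℝ) (α p ε0 : ℝ)
    (h3 : (3:ℝ) ≤ (N:ℝ)) (hα : 0 < α) (hα1 : α ≤ 1) (hp : 1 < p) (hε0 : 0 < ε0)
    (hdu : Differentiable ℝ u) (hddu : Differentiable ℝ (deriv u))
    (cdu : Continuous (deriv u)) (cddu : Continuous (deriv (deriv u)))
    (cu : Continuous u)
    (hupos : ∀ r ∈ Ico (0:ℝ) 1, 0 < u r)
    (hunn : ∀ s ∈ Icc (0:ℝ) 1, 0 ≤ u s)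
    (hmono : ∀ a b : ℝ, 0 ≤ a → a ≤ b → b ≤ 1 → u b ≤ u a)
    (hODE : ∀ r ∈ Ioo (0:ℝ) 1,
      deriv (fun s => s ^ ((N:ℝ) - 1) * deriv u s) r = -(r ^ ((N:ℝ) - 1 + α) * u r ^ p))
    (w : ℝ → ℝ) (hw_def : w = fun r => -deriv u r)
    (hwpos : ∀ r ∈ Ioc (0:ℝ) 1, 0 < w r)
    (hwlow : ∀ s ∈ Ioc (0:ℝ) 1, u s ^ p * s ^ ((1:ℝ)+α) / ((N:ℝ)+α) ≤ w s)
    (hwup : ∀ s ∈ Ioc (0:ℝ) 1, w s ≤ u 0 ^ p * s ^ ((1:ℝ)+α) / ((N:ℝ)+α))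
    (I : ℝ → ℝ) (hwI : ∀ r ∈ Ioc (0:ℝ) 1, w r = I r / r ^ ((N:ℝ)-1))
    (hstar : ∀ r ∈ Ioo (0:ℝ) 1,
      α * r ^ ((N:ℝ)+α) * u r ^ p + ε0 * p * r ^ ((2:ℝ)+α) * u r ^ (p-1) * I r
        ≤ ((N:ℝ)+1) * I r)
    (v : ℝ → ℝ) (hv : ContDiff ℝ 1 v) (hv0 : v 0 = 0) (hv1 : v 1 = 0) :
    (1+ε0) * (p * ∫ r in (0:ℝ)..1, r ^ ((N:ℝ) - 1 + α) * u r ^ (p - 1) * v r ^ 2) ≤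
      (∫ r in (0:ℝ)..1, r ^ ((N:ℝ) - 1) * (deriv v r) ^ 2)
        + 2 * (N:ℝ) * (∫ r in (0:ℝ)..1, r ^ ((N:ℝ) - 3) * v r ^ 2) := by
  have hp0 : 0 < p := by linarith
  have hp1 : 0 < p - 1 := by linarith
  have cw : Continuous w := by rw [hw_def]; exact cdu.neg
  have cupow : Continuous fun r => u r ^ p := (Real.continuous_rpow_const hp0.le).comp cu
  have cupow1 : Continuous fun r => u r ^ (p-1) := (Real.continuous_rpow_const hp1.le).comp cu
  have hu21 : 0 < u (1/2) := hupos _ (by norm_num)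
  have hu0p : 0 < u 0 ^ p := Real.rpow_pos_of_pos (hupos 0 (by norm_num)) _
  have hdv : Differentiable ℝ v := hv.differentiable (by norm_num)
  have cv : Continuous v := hdv.continuous
  have cdv : Continuous (deriv v) := (contDiff_one_iff_deriv.mp hv).2
  set E : ℝ → ℝ := fun r => r ^ ((N:ℝ)-1) * (deriv v r)^2
    + 2*(N:ℝ) * (r ^ ((N:ℝ)-3) * v r ^ 2)
    - (1+ε0) * p * (r ^ ((N:ℝ)-1+α) * u r ^ (p-1) * v r ^ 2) with hE_def
  have c1' : Continuous fun r : ℝ => r ^ ((N:ℝ)-1) * (deriv v r)^2 :=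
    (aux_cont_rpow (by linarith)).mul (cdv.pow 2)
  have c2' : Continuous fun r : ℝ => r ^ ((N:ℝ)-3) * v r ^ 2 :=
    (aux_cont_rpow (by linarith)).mul (cv.pow 2)
  have c3' : Continuous fun r : ℝ => r ^ ((N:ℝ)-1+α) * u r ^ (p-1) * v r ^ 2 :=
    ((aux_cont_rpow (by linarith)).mul cupow1).mul (cv.pow 2)
  have cE : Continuous E := by
    rw [hE_def]
    exact (c1'.add (continuous_const.mul c2')).sub (continuous_const.mul c3')
  have hsum : (∫ r in (0:ℝ)..1, r ^ ((N:ℝ) - 1) * (deriv v r) ^ 2)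
      + 2 * (N:ℝ) * (∫ r in (0:ℝ)..1, r ^ ((N:ℝ) - 3) * v r ^ 2)
      - (1+ε0) * p * (∫ r in (0:ℝ)..1, r ^ ((N:ℝ) - 1 + α) * u r ^ (p - 1) * v r ^ 2)
      = ∫ r in (0:ℝ)..1, E r := by
    rw [hE_def]
    rw [intervalIntegral.integral_sub (f := fun r => r ^ ((N:ℝ)-1) * (deriv v r)^2
      + 2*(N:ℝ) * (r ^ ((N:ℝ)-3) * v r ^ 2))
      (g := fun r => (1+ε0) * p * (r ^ ((N:ℝ)-1+α) * u r ^ (p-1) * v r ^ 2)) ((c1'.add (continuous_const.mul c2')).intervalIntegrable _ _)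
      ((continuous_const.mul c3').intervalIntegrable _ _),
      intervalIntegral.integral_add (f := fun r => r ^ ((N:ℝ)-1) * (deriv v r)^2)
      (g := fun r => 2*(N:ℝ) * (r ^ ((N:ℝ)-3) * v r ^ 2)) (c1'.intervalIntegrable _ _)
      ((continuous_const.mul c2').intervalIntegrable _ _),
      intervalIntegral.integral_const_mul, intervalIntegral.integral_const_mul]
  suffices h0 : 0 ≤ ∫ r in (0:ℝ)..1, E r by linarith
  set G : ℝ → ℝ := fun r => r ^ ((N:ℝ)-1+α) * u r ^ p - ((N:ℝ)-1) * r ^ ((N:ℝ)-2) * w r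
    with hG_def
  have cG : Continuous G :=
    ((aux_cont_rpow (by linarith)).mul cupow).sub
      ((continuous_const.mul (aux_cont_rpow (by linarith))).mul cw)
  set P : ℝ → ℝ := fun r => G r * v r ^ 2 / w r with hP_def
  have hP1 : P 1 = 0 := by rw [hP_def]; simp [hv1]
  have hPcontAt : ∀ r ∈ Ioc (0:ℝ) 1, ContinuousAt P r := by
    intro r hr
    rw [hP_def]
    exact (cG.continuousAt.mul ((cv.pow 2).continuousAt)).div cw.continuousAt (hwpos r hr).ne'
  have hPderiv : ∀ r ∈ Ioo (0:ℝ) 1, ∃ d, HasDerivAt P d r ∧ d ≤ E r := by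
    intro r hr
    obtain ⟨hr0, hr1⟩ := hr
    have hrIoc : r ∈ Ioc (0:ℝ) 1 := ⟨hr0, hr1.le⟩
    have hur : 0 < u r := hupos r ⟨hr0.le, hr1⟩
    have hwr : 0 < w r := hwpos r hrIoc
    have hR1 : (0:ℝ) < r ^ ((N:ℝ)-1) := Real.rpow_pos_of_pos hr0 _
    have hX2 : (0:ℝ) < r ^ ((N:ℝ)-3) := Real.rpow_pos_of_pos hr0 _
    have hD1 : (0:ℝ) < r ^ ((N:ℝ)-1+α-1) := Real.rpow_pos_of_pos hr0 _
    have hderu : deriv u r = -w r := by rw [hw_def]; simp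
    -- exponent juggling lemmas
    have eA : r ^ ((N:ℝ)-1+α-1) * r = r ^ ((N:ℝ)-1+α) := by
      have h := Real.rpow_add hr0 ((N:ℝ)-1+α-1) 1
      rw [Real.rpow_one] at h
      rw [← h]; congr 1; ring
    have eB : r ^ ((N:ℝ)-2) * r = r ^ ((N:ℝ)-1) := by
      have h := Real.rpow_add hr0 ((N:ℝ)-2) 1
      rw [Real.rpow_one] at h
      rw [← h]; congr 1; ring
    have eD : r ^ ((N:ℝ)-3) * r = r ^ ((N:ℝ)-2) := by
      have h := Real.rpow_add hr0 ((N:ℝ)-3) 1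
      rw [Real.rpow_one] at h
      rw [← h]; congr 1; ring
    have eX : r ^ ((N:ℝ)-2-1) = r ^ ((N:ℝ)-3) := by congr 1; ring
    have eX1 : r ^ ((N:ℝ)-1-1) = r ^ ((N:ℝ)-2) := by congr 1; ring
    have eF : r ^ ((N:ℝ)+α) = r ^ ((N:ℝ)-1+α) * r := by
      rw [show (N:ℝ)+α = ((N:ℝ)-1+α)+1 from by ring, Real.rpow_add hr0, Real.rpow_one]
    have eE : r ^ ((2:ℝ)+α) * r ^ ((N:ℝ)-1) = r ^ ((N:ℝ)-1+α) * r * r := by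
      rw [← Real.rpow_add hr0,
        show (2:ℝ)+α+((N:ℝ)-1) = ((N:ℝ)-1+α)+1+1 from by ring,
        Real.rpow_add hr0, Real.rpow_add hr0, Real.rpow_one]
    -- I r = r^{N-1} * w r
    have hIr : I r = r ^ ((N:ℝ)-1) * w r := by
      have h := hwI r hrIoc
      rw [eq_div_iff hR1.ne'] at h
      rw [← h]; ring
    -- second derivative of u via the ODE
    have hprod : HasDerivAt (fun s => s ^ ((N:ℝ)-1) * deriv u s)
        (((N:ℝ)-1) * r ^ ((N:ℝ)-1-1) * deriv u r + r ^ ((N:ℝ)-1) * deriv (deriv u) r) r :=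
      (Real.hasDerivAt_rpow_const (Or.inl hr0.ne')).mul ((hddu r).hasDerivAt)
    have hw' : HasDerivAt w (G r / r ^ ((N:ℝ)-1)) r := by
      have hdd : HasDerivAt w (-(deriv (deriv u) r)) r := by
        rw [hw_def]; exact ((hddu r).hasDerivAt).neg
      have h2 : ((N:ℝ)-1) * r ^ ((N:ℝ)-1-1) * deriv u r + r ^ ((N:ℝ)-1) * deriv (deriv u) r
          = -(r ^ ((N:ℝ)-1+α) * u r ^ p) := by
        rw [← hprod.deriv]; exact hODE r ⟨hr0, hr1⟩
      rw [hderu, eX1] at h2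
      have hval : -(deriv (deriv u) r) = G r / r ^ ((N:ℝ)-1) := by
        rw [eq_div_iff hR1.ne']
        simp only [hG_def]
        linear_combination (-1 : ℝ) * h2
      rw [← hval]
      exact hdd
    have hv2' : HasDerivAt (fun s => v s ^ 2) (2 * v r * deriv v r) r := by
      have h := ((hdv r).hasDerivAt).pow 2
      norm_num at h
      exact h
    have hup' : HasDerivAt (fun s => u s ^ p) (p * u r ^ (p-1) * deriv u r) r := by
      have h := (Real.hasDerivAt_rpow_const (p := p)
        (x := u r) (Or.inl hur.ne')).comp r ((hdu r).hasDerivAt)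
      exact h
    have hRA' : HasDerivAt (fun s:ℝ => s ^ ((N:ℝ)-1+α)) (((N:ℝ)-1+α) * r ^ ((N:ℝ)-1+α-1)) r :=
      Real.hasDerivAt_rpow_const (Or.inl hr0.ne')
    have hRN2' : HasDerivAt (fun s:ℝ => ((N:ℝ)-1) * s ^ ((N:ℝ)-2))
        (((N:ℝ)-1) * (((N:ℝ)-2) * r ^ ((N:ℝ)-2-1))) r :=
      (Real.hasDerivAt_rpow_const (Or.inl hr0.ne')).const_mul _
    have hG' : HasDerivAt G
        ((((N:ℝ)-1+α) * r ^ ((N:ℝ)-1+α-1) * u r ^ p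
          + r ^ ((N:ℝ)-1+α) * (p * u r ^ (p-1) * deriv u r))
        - (((N:ℝ)-1) * (((N:ℝ)-2) * r ^ ((N:ℝ)-2-1)) * w r
          + ((N:ℝ)-1) * r ^ ((N:ℝ)-2) * (G r / r ^ ((N:ℝ)-1)))) r := by
      rw [hG_def]
      exact (hRA'.mul hup').sub (hRN2'.mul hw')
    have hG'c : HasDerivAt G
        (α * r ^ ((N:ℝ)-1+α-1) * u r ^ p
          - p * (r ^ ((N:ℝ)-1+α-1) * r) * u r ^ (p-1) * w r
          + ((N:ℝ)-1) * r ^ ((N:ℝ)-3) * w r) r := by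
      convert hG' using 1
      rw [hderu]
      simp only [hG_def]
      rw [eX, ← eA, ← eB, ← eD]
      field_simp
      ring
    -- the star inequality in reduced form
    have hstar2 : α * (r ^ ((N:ℝ)-1+α) * r) * u r ^ p
        + ε0 * p * (r ^ ((N:ℝ)-1+α) * r * r) * u r ^ (p-1) * w r
        ≤ ((N:ℝ)+1) * (r ^ ((N:ℝ)-1) * w r) := by
      have h := hstar r ⟨hr0, hr1⟩
      rw [hIr] at h
      have heq : α * (r ^ ((N:ℝ)-1+α) * r) * u r ^ p
          + ε0 * p * (r ^ ((N:ℝ)-1+α) * r * r) * u r ^ (p-1) * w r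
          = α * r ^ ((N:ℝ)+α) * u r ^ p
            + ε0 * p * r ^ ((2:ℝ)+α) * u r ^ (p-1) * (r ^ ((N:ℝ)-1) * w r) := by
        rw [eF]
        linear_combination (-(ε0 * p * u r ^ (p-1) * w r)) * eE
      rw [heq]
      exact h
    refine ⟨_, by rw [hP_def]; exact (hG'c.mul hv2').div hw' hwr.ne', ?_⟩
    -- now prove the derivative is at most E r
    rw [div_le_iff₀ (by positivity : (0:ℝ) < w r ^ 2)]
    apply le_of_mul_le_mul_right _ hR1
    rw [sub_mul]
    have hc2 : G r * v r ^ 2 * (G r / r ^ ((N:ℝ)-1)) * r ^ ((N:ℝ)-1) = G r * v r ^ 2 * G r := by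
      field_simp
    simp only [Pi.mul_apply]
    rw [hc2]
    simp only [hG_def, hE_def]
    rw [← eA, ← eB, ← eD]
    rw [← eA, ← eB, ← eD] at hstar2
    have hs2m := mul_le_mul_of_nonneg_right hstar2
      (by positivity : (0:ℝ) ≤ v r ^ 2 * w r * r ^ ((N:ℝ)-3))
    have am := sq_nonneg (r ^ ((N:ℝ)-3) * r * r * deriv v r * w r
      - (r ^ ((N:ℝ)-1+α-1) * r * u r ^ p
        - ((N:ℝ)-1) * (r ^ ((N:ℝ)-3) * r) * w r) * v r)
    nlinarith [hs2m, am]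
  obtain ⟨L, hL⟩ := isCompact_Icc.exists_bound_of_continuousOn
    (cdv.continuousOn : ContinuousOn (deriv v) (Icc (0:ℝ) 1))
  have hL0 : 0 ≤ L := le_trans (norm_nonneg _) (hL 0 (by norm_num))
  have hvB : ∀ a ∈ Icc (0:ℝ) 1, |v a| ≤ L * a := by
    intro a ha
    have := Convex.norm_image_sub_le_of_norm_deriv_le (f := v)
      (fun x _ => hdv x) hL (convex_Icc (0:ℝ) 1) (by norm_num : (0:ℝ) ∈ Icc (0:ℝ) 1) ha
    rw [hv0] at this
    simpa [abs_of_nonneg ha.1] using this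
  set Kb : ℝ := (N:ℝ) * u 0 ^ p * L^2 * ((N:ℝ)+α) / u (1/2) ^ p with hKb_def
  have hKb0 : 0 ≤ Kb := by
    rw [hKb_def]
    have h12 : (0:ℝ) < u (1/2) ^ p := Real.rpow_pos_of_pos hu21 _
    positivity
  have hPbound : ∀ a ∈ Ioc (0:ℝ) (1/2), |P a| ≤ Kb * a := by
    intro a ha
    obtain ⟨ha0, ha2⟩ := ha
    have haIoc : a ∈ Ioc (0:ℝ) 1 := ⟨ha0, by linarith⟩
    have hwa : 0 < w a := hwpos a haIoc
    have h12p : (0:ℝ) < u (1/2) ^ p := Real.rpow_pos_of_pos hu21 _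
    have hKα : (0:ℝ) < (N:ℝ)+α := by linarith
    have ha1α : (0:ℝ) < a ^ ((1:ℝ)+α) := Real.rpow_pos_of_pos ha0 _
    have haNA : (0:ℝ) < a ^ ((N:ℝ)-1+α) := Real.rpow_pos_of_pos ha0 _
    have hu12a : u (1/2) ≤ u a := hmono a (1/2) ha0.le ha2 (by norm_num)
    have hWlow : u (1/2) ^ p * a ^ ((1:ℝ)+α) / ((N:ℝ)+α) ≤ w a := by
      have h1 : u (1/2) ^ p ≤ u a ^ p := Real.rpow_le_rpow hu21.le hu12a hp0.le
      have h2 := hwlow a haIoc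
      have h3 : u (1/2) ^ p * a ^ ((1:ℝ)+α) / ((N:ℝ)+α) ≤ u a ^ p * a ^ ((1:ℝ)+α) / ((N:ℝ)+α) := by
        apply (div_le_div_iff_of_pos_right hKα).mpr
        exact mul_le_mul_of_nonneg_right h1 ha1α.le
      linarith
    have hWlowpos : (0:ℝ) < u (1/2) ^ p * a ^ ((1:ℝ)+α) / ((N:ℝ)+α) := by positivity
    have hu0a : u a ≤ u 0 := hmono 0 a le_rfl ha0.le (by linarith)
    have huap : u a ^ p ≤ u 0 ^ p :=
      Real.rpow_le_rpow (hunn a ⟨ha0.le, by linarith⟩) hu0a hp0.le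
    have hexp1 : a ^ ((N:ℝ)-2) * a ^ ((1:ℝ)+α) = a ^ ((N:ℝ)-1+α) := by
      rw [← Real.rpow_add ha0]; congr 1; ring
    have hGa : |G a| ≤ (N:ℝ) * u 0 ^ p * a ^ ((N:ℝ)-1+α) := by
      have hterm1 : a ^ ((N:ℝ)-1+α) * u a ^ p ≤ a ^ ((N:ℝ)-1+α) * u 0 ^ p :=
        mul_le_mul_of_nonneg_left huap haNA.le
      have hterm1nn : 0 ≤ a ^ ((N:ℝ)-1+α) * u a ^ p :=
        mul_nonneg haNA.le (Real.rpow_nonneg (hunn a ⟨ha0.le, by linarith⟩) _)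
      have hwa_up := hwup a haIoc
      have haN2 : (0:ℝ) < a ^ ((N:ℝ)-2) := Real.rpow_pos_of_pos ha0 _
      have hterm2 : ((N:ℝ)-1) * a ^ ((N:ℝ)-2) * w a
          ≤ ((N:ℝ)-1) * u 0 ^ p * a ^ ((N:ℝ)-1+α) := by
        have h1 : a ^ ((N:ℝ)-2) * w a ≤ a ^ ((N:ℝ)-2) * (u 0 ^ p * a ^ ((1:ℝ)+α) / ((N:ℝ)+α)) :=
          mul_le_mul_of_nonneg_left hwa_up haN2.le
        have h2 : a ^ ((N:ℝ)-2) * (u 0 ^ p * a ^ ((1:ℝ)+α) / ((N:ℝ)+α))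
            = u 0 ^ p * (a ^ ((N:ℝ)-2) * a ^ ((1:ℝ)+α)) / ((N:ℝ)+α) := by ring
        rw [h2, hexp1] at h1
        have h4 : u 0 ^ p * a ^ ((N:ℝ)-1+α) / ((N:ℝ)+α) ≤ u 0 ^ p * a ^ ((N:ℝ)-1+α) := by
          apply div_le_self (by positivity) (by linarith)
        nlinarith [h1, h4]
      have hterm2nn : 0 ≤ ((N:ℝ)-1) * a ^ ((N:ℝ)-2) * w a := by
        have : (0:ℝ) ≤ (N:ℝ)-1 := by linarith
        positivity
      rw [hG_def]
      rw [abs_sub_le_iff]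
      constructor
      · nlinarith [hterm1, hterm2nn]
      · nlinarith [hterm1nn, hterm2]
    have hva : v a ^ 2 ≤ L^2 * a^2 := by
      have h1 := hvB a ⟨ha0.le, by linarith⟩
      have h2 : |v a|^2 ≤ (L*a)^2 := by
        apply pow_le_pow_left₀ (abs_nonneg _) h1
      rw [sq_abs] at h2
      nlinarith [h2]
    have hPa : |P a| = |G a| * v a ^ 2 / w a := by
      rw [hP_def]
      rw [abs_div, abs_mul, abs_of_pos hwa, abs_of_nonneg (sq_nonneg (v a))]
    rw [hPa]
    have hstep1 : |G a| * v a ^ 2 / w a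
        ≤ ((N:ℝ) * u 0 ^ p * a ^ ((N:ℝ)-1+α)) * (L^2 * a^2)
          / (u (1/2) ^ p * a ^ ((1:ℝ)+α) / ((N:ℝ)+α)) := by
      apply div_le_div₀ (by positivity) _ hWlowpos hWlow
      exact mul_le_mul hGa hva (sq_nonneg _) (by positivity)
    have hexp2 : a ^ ((N:ℝ)-1+α) * a^2 = a ^ ((N:ℝ)+1+α) := by
      rw [show (a:ℝ)^2 = a ^ ((2:ℕ):ℝ) from (Real.rpow_natCast a 2).symm, ← Real.rpow_add ha0]
      congr 1; push_cast; ring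
    have hexp3 : a ^ ((N:ℝ)+1+α) / a ^ ((1:ℝ)+α) = a ^ ((N:ℝ)) := by
      rw [← Real.rpow_sub ha0]; congr 1; ring
    have heq : ((N:ℝ) * u 0 ^ p * a ^ ((N:ℝ)-1+α)) * (L^2 * a^2)
          / (u (1/2) ^ p * a ^ ((1:ℝ)+α) / ((N:ℝ)+α)) = Kb * a ^ ((N:ℝ)) := by
      rw [hKb_def]
      rw [← hexp3, ← hexp2]
      field_simp
    have hfin : a ^ ((N:ℝ)) ≤ a := by
      calc a ^ ((N:ℝ)) ≤ a ^ (1:ℝ) :=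
            Real.rpow_le_rpow_of_exponent_ge ha0 (by linarith) (by linarith)
      _ = a := Real.rpow_one a
    calc |G a| * v a ^ 2 / w a ≤ _ := hstep1
    _ = Kb * a ^ ((N:ℝ)) := heq
    _ ≤ Kb * a := mul_le_mul_of_nonneg_left hfin hKb0
  obtain ⟨Eb, hEb⟩ := isCompact_Icc.exists_bound_of_continuousOn
    (cE.continuousOn : ContinuousOn E (Icc (0:ℝ) 1))
  have hEb0 : 0 ≤ Eb := le_trans (norm_nonneg _) (hEb 0 (by norm_num))
  have hstep : ∀ a ∈ Ioc (0:ℝ) (1/2), -((Kb + Eb) * a) ≤ ∫ r in (0:ℝ)..1, E r := by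
    intro a ha
    have haI : a ∈ Ioo (0:ℝ) 1 := ⟨ha.1, by linarith [ha.2]⟩
    have hFTCE : ∀ t : ℝ, HasDerivAt (fun s => ∫ x in a..s, E x) (E t) t := fun t =>
      intervalIntegral.integral_hasDerivAt_right (cE.intervalIntegrable _ _)
        (cE.stronglyMeasurableAtFilter _ _) cE.continuousAt
    set Ψ : ℝ → ℝ := fun t => (∫ x in a..t, E x) - P t with hΨ_def
    have hΨc : ContinuousOn Ψ (Icc a 1) := by
      apply ContinuousOn.sub
      · exact fun t _ => (hFTCE t).continuousAt.continuousWithinAt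
      · intro t ht
        exact (hPcontAt t ⟨lt_of_lt_of_le haI.1 ht.1, ht.2⟩).continuousWithinAt
    have hmonoΨ : MonotoneOn Ψ (Icc a 1) := by
      apply monotoneOn_of_deriv_nonneg (convex_Icc a 1) hΨc
      · intro t ht
        rw [interior_Icc] at ht
        obtain ⟨d, hd, _⟩ := hPderiv t ⟨lt_trans haI.1 ht.1, lt_of_lt_of_le ht.2 le_rfl⟩
        exact ((hFTCE t).sub hd).differentiableAt.differentiableWithinAt
      · intro t ht
        rw [interior_Icc] at ht
        obtain ⟨d, hd, hdE⟩ := hPderiv t ⟨lt_trans haI.1 ht.1, ht.2⟩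
        rw [show deriv Ψ t = E t - d from ((hFTCE t).sub hd).deriv]
        linarith
    have hΨle : Ψ a ≤ Ψ 1 := hmonoΨ ⟨le_rfl, haI.2.le⟩ ⟨haI.2.le, le_rfl⟩ haI.2.le
    have hΨa : Ψ a = -(P a) := by rw [hΨ_def]; simp
    have hΨ1 : Ψ 1 = ∫ x in a..(1:ℝ), E x := by rw [hΨ_def]; simp [hP1]
    have h1 : -(P a) ≤ ∫ x in a..(1:ℝ), E x := by rw [← hΨa, ← hΨ1]; exact hΨle
    have hsplitE : (∫ r in (0:ℝ)..1, E r) = (∫ x in (0:ℝ)..a, E x) + ∫ x in a..(1:ℝ), E x :=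
      (intervalIntegral.integral_add_adjacent_intervals
        (cE.intervalIntegrable _ _) (cE.intervalIntegrable _ _)).symm
    have h2 : |∫ x in (0:ℝ)..a, E x| ≤ Eb * a := by
      have hb := intervalIntegral.norm_integral_le_of_norm_le_const
        (a := (0:ℝ)) (b := a) (C := Eb) (f := E) ?_
      · rw [Real.norm_eq_abs] at hb
        calc |∫ x in (0:ℝ)..a, E x| ≤ Eb * |a - 0| := hb
        _ = Eb * a := by rw [abs_of_nonneg (by linarith [ha.1] : (0:ℝ) ≤ a - 0)]; ring
      · intro x hx
        rw [uIoc_of_le ha.1.le] at hx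
        exact hEb x ⟨hx.1.le, le_trans hx.2 (by linarith [ha.2])⟩
    have h3 : |P a| ≤ Kb * a := hPbound a ha
    rw [hsplitE]
    have h2' := abs_le.mp h2
    have h3' := abs_le.mp h3
    linarith [h2'.1, h3'.2, h1]
  have hseq : Filter.Tendsto (fun n : ℕ => -((Kb + Eb) * (1/(n+2 : ℝ)))) Filter.atTop (nhds 0) := by
    have h1 : Filter.Tendsto (fun n : ℕ => (1:ℝ)/(n+2)) Filter.atTop (nhds 0) := by
      have h2 := (tendsto_one_div_add_atTop_nhds_zero_nat (𝕜 := ℝ)).comp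
        (Filter.tendsto_add_atTop_nat 1)
      have : (fun n : ℕ => (1:ℝ)/((n+1 : ℕ)+1)) = fun n : ℕ => (1:ℝ)/(n+2) := by
        funext n; push_cast; ring_nf
      rwa [Function.comp_def, this] at h2
    have h4 := h1.const_mul (-(Kb + Eb))
    have h5 : (fun n : ℕ => -(Kb + Eb) * ((1:ℝ)/(n+2))) = fun n : ℕ => -((Kb + Eb) * (1/(n+2 : ℝ))) := by
      funext n; ring
    rw [h5] at h4
    simpa using h4
  apply le_of_tendsto hseq
  filter_upwards with n
  apply hstep
  constructor
  · positivity
  · rw [div_le_div_iff₀ (by positivity) (by norm_num)]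
    have : (0:ℝ) ≤ (n:ℝ) := Nat.cast_nonneg n
    linarith

set_option maxHeartbeats 2000000 in
theorem stmt_13 (N : ℕ) (hN : 3 ≤ N) (α p : ℝ) (hα : 0 < α) (hα1 : α ≤ 1) (hp : 1 < p)
    (hpα : p < ((N : ℝ) + 2 + 2 * α) / ((N : ℝ) - 2))
    (u : ℝ → ℝ) (hu : ContDiff ℝ 2 u)
    (hODE : ∀ r ∈ Ioo (0:ℝ) 1,
      deriv (fun s => s ^ ((N:ℝ) - 1) * deriv u s) r = -(r ^ ((N:ℝ) - 1 + α) * u r ^ p))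
    (hu'0 : deriv u 0 = 0) (hu1 : u 1 = 0)
    (hupos : ∀ r ∈ Ico (0:ℝ) 1, 0 < u r) :
    1 < sInf { q : ℝ | ∃ v : ℝ → ℝ, ContDiff ℝ 1 v ∧ v 0 = 0 ∧ v 1 = 0 ∧
      (∫ r in (0:ℝ)..1, r ^ ((N:ℝ) - 1 + α) * u r ^ (p - 1) * v r ^ 2) ≠ 0 ∧
      q = ((∫ r in (0:ℝ)..1, r ^ ((N:ℝ) - 1) * (deriv v r) ^ 2)
            + 2 * (N : ℝ) * (∫ r in (0:ℝ)..1, r ^ ((N:ℝ) - 3) * v r ^ 2))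
          / (p * ∫ r in (0:ℝ)..1, r ^ ((N:ℝ) - 1 + α) * u r ^ (p - 1) * v r ^ 2) } := by
  have h3 : (3:ℝ) ≤ (N:ℝ) := by exact_mod_cast hN
  have hp0 : 0 < p := by linarith
  have hp1 : 0 < p - 1 := by linarith
  -- basic regularity
  have hdu : Differentiable ℝ u := hu.differentiable (by norm_num)
  have cu : Continuous u := hdu.continuous
  have hcd1 : ContDiff ℝ 1 (deriv u) := by
    exact (contDiff_succ_iff_deriv.mp (show ContDiff ℝ (1+1) u by norm_num; exact hu)).2.2
  have hddu : Differentiable ℝ (deriv u) := hcd1.differentiable (by norm_num)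
  have cdu : Continuous (deriv u) := hddu.continuous
  have cddu : Continuous (deriv (deriv u)) := (contDiff_one_iff_deriv.mp hcd1).2
  -- notation
  set w : ℝ → ℝ := fun r => -deriv u r with hw_def
  have cw : Continuous w := cdu.neg
  set f : ℝ → ℝ := fun s => s ^ ((N:ℝ) - 1 + α) * u s ^ p with hf_def
  have cupow : Continuous fun r => u r ^ p := (Real.continuous_rpow_const hp0.le).comp cu
  have cupow1 : Continuous fun r => u r ^ (p-1) := (Real.continuous_rpow_const hp1.le).comp cu
  have cf : Continuous f := ((Real.continuous_rpow_const (by linarith)).mul cupow)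
  set I : ℝ → ℝ := fun r => ∫ s in (0:ℝ)..r, f s with hI_def
  have hIderiv : ∀ r : ℝ, HasDerivAt I (f r) r := fun r =>
    intervalIntegral.integral_hasDerivAt_right (cf.intervalIntegrable _ _)
      (cf.stronglyMeasurableAtFilter _ _) cf.continuousAt
  have cI : Continuous I := continuous_iff_continuousAt.mpr fun r => (hIderiv r).continuousAt
  have hunn : ∀ s ∈ Icc (0:ℝ) 1, 0 ≤ u s := by
    intro s hs
    rcases eq_or_lt_of_le hs.2 with rfl | h
    · exact le_of_eq hu1.symm
    · exact (hupos s ⟨hs.1, h⟩).le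
  have hFTC : ∀ r ∈ Ioc (0:ℝ) 1, r ^ ((N:ℝ) - 1) * deriv u r = -I r := by
    set F : ℝ → ℝ := fun s => s ^ ((N:ℝ)-1) * deriv u s + I s with hF_def
    have cF : Continuous F := ((aux_cont_rpow (by linarith)).mul cdu).add cI
    have hF0 : F 0 = 0 := by
      simp [hF_def, hI_def, Real.zero_rpow (show ((N:ℝ)-1) ≠ 0 by linarith), hu'0]
    have hFd : ∀ x ∈ Ioo (0:ℝ) 1, HasDerivAt F 0 x := by
      intro x hx
      have hne : deriv (fun s => s ^ ((N:ℝ)-1) * deriv u s) x ≠ 0 := by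
        rw [hODE x hx]
        have h1 : 0 < x ^ ((N:ℝ)-1+α) := Real.rpow_pos_of_pos hx.1 _
        have h2 : 0 < u x ^ p := Real.rpow_pos_of_pos (hupos x ⟨hx.1.le, hx.2⟩) _
        nlinarith
      have h1 : HasDerivAt (fun s => s ^ ((N:ℝ)-1) * deriv u s) (-(x ^ ((N:ℝ)-1+α) * u x ^ p)) x := by
        have := (differentiableAt_of_deriv_ne_zero hne).hasDerivAt
        rwa [hODE x hx] at this
      have h2 : HasDerivAt F (-(x ^ ((N:ℝ)-1+α) * u x ^ p) + f x) x := h1.add (hIderiv x)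
      have : -(x ^ ((N:ℝ)-1+α) * u x ^ p) + f x = 0 := by simp [hf_def]
      rwa [this] at h2
    intro r hr
    have key : ∀ x ∈ Ioc (0:ℝ) r, F r = F x := by
      intro x hx
      have hcst := constant_of_has_deriv_right_zero (f := F) (a := x) (b := r)
        cF.continuousOn (fun y hy =>
          (hFd y ⟨lt_of_lt_of_le hx.1 hy.1, lt_of_lt_of_le hy.2 hr.2⟩).hasDerivWithinAt)
      exact hcst r ⟨hx.2, le_rfl⟩
    have h1 : Filter.Tendsto F (nhdsWithin 0 (Ioi 0)) (nhds (F 0)) :=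
      cF.continuousAt.continuousWithinAt
    have h2 : F =ᶠ[nhdsWithin (0:ℝ) (Ioi 0)] fun _ => F r := by
      filter_upwards [Ioo_mem_nhdsGT_of_mem (show (0:ℝ) ∈ Ico (0:ℝ) r from ⟨le_rfl, hr.1⟩)]
        with x hx
      exact (key x ⟨hx.1, hx.2.le⟩).symm
    have h3 : Filter.Tendsto (fun _ : ℝ => F r) (nhdsWithin 0 (Ioi 0)) (nhds (F 0)) :=
      Filter.Tendsto.congr' h2 h1
    have h4 : F r = F 0 := tendsto_nhds_unique tendsto_const_nhds h3
    have h5 : r ^ ((N:ℝ)-1) * deriv u r + I r = 0 := by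
      have := h4.trans hF0
      simpa [hF_def] using this
    linarith
  have hIpos : ∀ r ∈ Ioc (0:ℝ) 1, 0 < I r := by
    intro r hr
    apply intervalIntegral.intervalIntegral_pos_of_pos_on (cf.intervalIntegrable _ _) _ hr.1
    intro s hs
    have hs1 : s < 1 := lt_of_lt_of_le hs.2 hr.2
    have hus : 0 < u s := hupos s ⟨hs.1.le, hs1⟩
    exact mul_pos (Real.rpow_pos_of_pos hs.1 _) (Real.rpow_pos_of_pos hus _)
  have hwI : ∀ r ∈ Ioc (0:ℝ) 1, w r = I r / r ^ ((N:ℝ)-1) := by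
    intro r hr
    have hrp : (0:ℝ) < r ^ ((N:ℝ)-1) := Real.rpow_pos_of_pos hr.1 _
    have := hFTC r hr
    field_simp [hw_def]
    linarith [this]
  have hwpos : ∀ r ∈ Ioc (0:ℝ) 1, 0 < w r := by
    intro r hr
    rw [hwI r hr]
    exact div_pos (hIpos r hr) (Real.rpow_pos_of_pos hr.1 _)
  have hwnn : ∀ r ∈ Icc (0:ℝ) 1, 0 ≤ w r := by
    intro r hr
    rcases eq_or_lt_of_le hr.1 with rfl | h
    · simp [hw_def, hu'0]
    · exact (hwpos r ⟨h, hr.2⟩).le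
  have husub : ∀ a b : ℝ, a ≤ b → u a - u b = ∫ s in a..b, w s := by
    intro a b hab
    have h := intervalIntegral.integral_deriv_eq_sub (f := u) (a := a) (b := b)
      (fun x _ => hdu x) (cdu.intervalIntegrable _ _)
    have : ∫ s in a..b, w s = -∫ s in a..b, deriv u s := by
      rw [← intervalIntegral.integral_neg]
    rw [this, h]; ring
  have hmono : ∀ a b : ℝ, 0 ≤ a → a ≤ b → b ≤ 1 → u b ≤ u a := by
    intro a b ha hab hb1
    have h := husub a b hab
    have hnn : 0 ≤ ∫ s in a..b, w s := by
      apply intervalIntegral.integral_nonneg hab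
      intro s hs
      exact hwnn s ⟨le_trans ha hs.1, le_trans hs.2 hb1⟩
    linarith
  -- integral comparison bounds
  have hrint : ∀ a b : ℝ, 0 ≤ a → (∫ s in a..b, s ^ ((N:ℝ)-1+α))
      = (b ^ ((N:ℝ)+α) - a ^ ((N:ℝ)+α)) / ((N:ℝ)+α) := by
    intro a b ha
    have h := integral_rpow (a := a) (b := b) (r := (N:ℝ)-1+α) (Or.inl (by linarith))
    have he : (N:ℝ)-1+α+1 = (N:ℝ)+α := by ring
    rw [he] at h
    exact h
  have hIseg : ∀ a b : ℝ, 0 ≤ a → a ≤ b → b ≤ 1 →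
      u b ^ p * ((b ^ ((N:ℝ)+α) - a ^ ((N:ℝ)+α)) / ((N:ℝ)+α)) ≤ ∫ s in a..b, f s := by
    intro a b ha hab hb1
    have hmono' : (∫ s in a..b, u b ^ p * s ^ ((N:ℝ)-1+α)) ≤ ∫ s in a..b, f s := by
      apply intervalIntegral.integral_mono_on hab
        ((continuous_const.mul (aux_cont_rpow (by linarith))).intervalIntegrable _ _)
        (cf.intervalIntegrable _ _)
      intro s hs
      have hs0 : 0 ≤ s := le_trans ha hs.1
      have hub : u b ^ p ≤ u s ^ p :=
        Real.rpow_le_rpow (hunn b ⟨le_trans ha hab, hb1⟩)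
          (hmono s b hs0 hs.2 hb1) hp0.le
      have hsp : 0 ≤ s ^ ((N:ℝ)-1+α) := Real.rpow_nonneg hs0 _
      calc u b ^ p * s ^ ((N:ℝ)-1+α) ≤ u s ^ p * s ^ ((N:ℝ)-1+α) := by nlinarith
      _ = f s := by rw [hf_def]; ring
    rw [intervalIntegral.integral_const_mul, hrint a b ha] at hmono'
    exact hmono'
  have hIup : ∀ r ∈ Ioc (0:ℝ) 1, I r ≤ u 0 ^ p * r ^ ((N:ℝ)+α) / ((N:ℝ)+α) := by
    intro r hr
    have hmono' : I r ≤ ∫ s in (0:ℝ)..r, u 0 ^ p * s ^ ((N:ℝ)-1+α) := by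
      apply intervalIntegral.integral_mono_on hr.1.le (cf.intervalIntegrable _ _)
        ((continuous_const.mul (aux_cont_rpow (by linarith))).intervalIntegrable _ _)
      intro s hs
      have hub : u s ^ p ≤ u 0 ^ p :=
        Real.rpow_le_rpow (hunn s ⟨hs.1, le_trans hs.2 hr.2⟩)
          (hmono 0 s le_rfl hs.1 (le_trans hs.2 hr.2)) hp0.le
      have hsp : 0 ≤ s ^ ((N:ℝ)-1+α) := Real.rpow_nonneg hs.1 _
      calc f s = u s ^ p * s ^ ((N:ℝ)-1+α) := by rw [hf_def]; ring
      _ ≤ u 0 ^ p * s ^ ((N:ℝ)-1+α) := by nlinarith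
    rw [intervalIntegral.integral_const_mul, hrint 0 r le_rfl,
      Real.zero_rpow (show ((N:ℝ)+α) ≠ 0 by positivity)] at hmono'
    calc I r ≤ u 0 ^ p * ((r ^ ((N:ℝ)+α) - 0) / ((N:ℝ)+α)) := hmono'
    _ = u 0 ^ p * r ^ ((N:ℝ)+α) / ((N:ℝ)+α) := by ring
  have hIlow : ∀ r ∈ Ioc (0:ℝ) 1, u r ^ p * r ^ ((N:ℝ)+α) / ((N:ℝ)+α) ≤ I r := by
    intro r hr
    have h := hIseg 0 r le_rfl hr.1.le hr.2
    rw [Real.zero_rpow (show ((N:ℝ)+α) ≠ 0 by positivity)] at h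
    calc u r ^ p * r ^ ((N:ℝ)+α) / ((N:ℝ)+α)
        = u r ^ p * ((r ^ ((N:ℝ)+α) - 0) / ((N:ℝ)+α)) := by ring
    _ ≤ I r := h
  have hKpos : (0:ℝ) < (N:ℝ)+α := by linarith
  have hwlow : ∀ s ∈ Ioc (0:ℝ) 1, u s ^ p * s ^ ((1:ℝ)+α) / ((N:ℝ)+α) ≤ w s := by
    intro s hs
    have hs0 : 0 < s := hs.1
    have h3' : u s ^ p * s ^ ((N:ℝ)+α) / ((N:ℝ)+α) ≤ I s := hIlow s hs
    have h4 : w s = I s / s ^ ((N:ℝ)-1) := hwI s hs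
    have h5 : s ^ ((N:ℝ)+α) = s ^ ((N:ℝ)-1) * s ^ ((1:ℝ)+α) := by
      rw [← Real.rpow_add hs0]; congr 1; ring
    have hsn : 0 < s ^ ((N:ℝ)-1) := Real.rpow_pos_of_pos hs0 _
    rw [h4, le_div_iff₀ hsn]
    calc u s ^ p * s ^ ((1:ℝ)+α) / ((N:ℝ)+α) * s ^ ((N:ℝ)-1)
        = u s ^ p * s ^ ((N:ℝ)+α) / ((N:ℝ)+α) := by rw [h5]; ring
    _ ≤ I s := h3'
  have hwup : ∀ s ∈ Ioc (0:ℝ) 1, w s ≤ u 0 ^ p * s ^ ((1:ℝ)+α) / ((N:ℝ)+α) := by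
    intro s hs
    have hs0 : 0 < s := hs.1
    have h3' : I s ≤ u 0 ^ p * s ^ ((N:ℝ)+α) / ((N:ℝ)+α) := hIup s hs
    have h4 : w s = I s / s ^ ((N:ℝ)-1) := hwI s hs
    have h5 : s ^ ((N:ℝ)+α) = s ^ ((N:ℝ)-1) * s ^ ((1:ℝ)+α) := by
      rw [← Real.rpow_add hs0]; congr 1; ring
    have hsn : 0 < s ^ ((N:ℝ)-1) := Real.rpow_pos_of_pos hs0 _
    rw [h4, div_le_iff₀ hsn]
    calc I s ≤ u 0 ^ p * s ^ ((N:ℝ)+α) / ((N:ℝ)+α) := h3'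
    _ = u 0 ^ p * s ^ ((1:ℝ)+α) / ((N:ℝ)+α) * s ^ ((N:ℝ)-1) := by rw [h5]; ring
  have hIsplit : ∀ a b : ℝ, I b = I a + ∫ s in a..b, f s := by
    intro a b
    rw [hI_def]
    exact (intervalIntegral.integral_add_adjacent_intervals
      (cf.intervalIntegrable _ _) (cf.intervalIntegrable _ _)).symm
  have hu21 : 0 < u (1/2) := hupos _ (by norm_num)
  have hu41 : 0 < u (1/4) := hupos _ (by norm_num)
  have hu0p : 0 < u 0 ^ p := Real.rpow_pos_of_pos (hupos 0 (by norm_num)) _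
  have hq4 : 0 < u (1/4) ^ p - u (1/2) ^ p := by
    have hlt : u (1/2) < u (1/4) := by
      have h := husub (1/4) (1/2) (by norm_num)
      have hpos : 0 < ∫ s in (1/4:ℝ)..(1/2), w s := by
        apply intervalIntegral.intervalIntegral_pos_of_pos_on
          (cw.intervalIntegrable _ _) _ (by norm_num)
        intro s hs
        exact hwpos s ⟨by linarith [hs.1], by linarith [hs.2]⟩
      linarith
    have := Real.rpow_lt_rpow hu21.le hlt hp0
    linarith
  set c1 : ℝ := p * u (1/2) ^ p / (((N:ℝ)+α) * 2 ^ ((N:ℝ)+2+2*α)) with hc1_def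
  set c2 : ℝ := (u (1/4) ^ p - u (1/2) ^ p) * (1/4 : ℝ) ^ ((N:ℝ)+α) / u 0 ^ (p-1) with hc2_def
  have hc1 : 0 < c1 := by
    apply div_pos (mul_pos hp0 (Real.rpow_pos_of_pos hu21 _))
    positivity
  have hc2 : 0 < c2 := by
    apply div_pos (mul_pos hq4 (Real.rpow_pos_of_pos (by norm_num) _))
    exact Real.rpow_pos_of_pos (hupos 0 (by norm_num)) _
  set ε1 : ℝ := min c1 c2 with hε1_def
  have hε1 : 0 < ε1 := lt_min hc1 hc2
  set ε0 : ℝ := ε1 * ((N:ℝ)+1) / (p * u 0 ^ p) with hε0_def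
  have hε0 : 0 < ε0 := by
    apply div_pos (mul_pos hε1 (by linarith)) (mul_pos hp0 hu0p)
  -- the crucial quantitative bound
  have hK : (0:ℝ) < (N:ℝ)+α := by linarith
  have hJ : ∀ r ∈ Ioo (0:ℝ) 1, ε1 * (u r ^ (p-1) * r ^ ((N:ℝ)+2+2*α)) ≤
      ((N:ℝ)+α) * I r - r ^ ((N:ℝ)+α) * u r ^ p := by
    intro r hr
    obtain ⟨hr0, hr1⟩ := hr
    have hur : 0 < u r := hupos r ⟨hr0.le, hr1⟩
    have hurp : 0 < u r ^ p := Real.rpow_pos_of_pos hur _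
    have hurp1 : 0 < u r ^ (p-1) := Real.rpow_pos_of_pos hur _
    rcases le_or_gt r (1/2) with hhalf | hhalf
    · -- case r ≤ 1/2
      have hsplit := hIsplit (r/2) r
      have hlow2 := hIlow (r/2) ⟨by linarith, by linarith⟩
      have hseg := hIseg (r/2) r (by linarith) (by linarith) (by linarith)
      have hA : u (r/2) ^ p * (r/2) ^ ((N:ℝ)+α) ≤ ((N:ℝ)+α) * I (r/2) := by
        rw [div_le_iff₀ hK] at hlow2; linarith
      have hB : u r ^ p * (r ^ ((N:ℝ)+α) - (r/2) ^ ((N:ℝ)+α)) ≤ ((N:ℝ)+α) * ∫ s in (r/2)..r, f s := by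
        have h2 : u r ^ p * ((r ^ ((N:ℝ)+α) - (r/2) ^ ((N:ℝ)+α)) / ((N:ℝ)+α))
            = u r ^ p * (r ^ ((N:ℝ)+α) - (r/2) ^ ((N:ℝ)+α)) / ((N:ℝ)+α) := by ring
        rw [h2, div_le_iff₀ hK] at hseg; linarith
      have hstep1 : (u (r/2) ^ p - u r ^ p) * (r/2) ^ ((N:ℝ)+α)
          ≤ ((N:ℝ)+α) * I r - r ^ ((N:ℝ)+α) * u r ^ p := by
        rw [hsplit]; nlinarith [hA, hB]
      -- MVT step
      have hle : u r ≤ u (r/2) := hmono (r/2) r (by linarith) (by linarith) (by linarith)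
      have hmvt := aux_mvt_rpow hur hle hp.le
      -- gap step
      have hgap : u r ^ p * (r/2) ^ ((1:ℝ)+α) / ((N:ℝ)+α) * (r/2) ≤ u (r/2) - u r := by
        rw [husub (r/2) r (by linarith)]
        have hptwise : ∀ s ∈ Icc (r/2) r, u r ^ p * (r/2) ^ ((1:ℝ)+α) / ((N:ℝ)+α) ≤ w s := by
          intro s hs
          have hs0 : 0 < s := by linarith [hs.1]
          have hs1 : s ≤ 1 := by linarith [hs.2]
          have hsIoc : s ∈ Ioc (0:ℝ) 1 := ⟨hs0, hs1⟩
          have h1 : u r ^ p ≤ u s ^ p :=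
            Real.rpow_le_rpow (hunn r ⟨hr0.le, hr1.le⟩)
              (hmono s r (by linarith [hs.1]) hs.2 hr1.le) hp0.le
          have h2 : (r/2) ^ ((1:ℝ)+α) ≤ s ^ ((1:ℝ)+α) :=
            Real.rpow_le_rpow (by linarith) hs.1 (by linarith)
          have h3 : u s ^ p * s ^ ((N:ℝ)+α) / ((N:ℝ)+α) ≤ I s := hIlow s hsIoc
          have h4 : w s = I s / s ^ ((N:ℝ)-1) := hwI s hsIoc
          have h5 : s ^ ((N:ℝ)+α) = s ^ ((N:ℝ)-1) * s ^ ((1:ℝ)+α) := by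
            rw [← Real.rpow_add hs0]; congr 1; ring
          have hsn : 0 < s ^ ((N:ℝ)-1) := Real.rpow_pos_of_pos hs0 _
          have h6 : u s ^ p * s ^ ((1:ℝ)+α) / ((N:ℝ)+α) ≤ w s := by
            rw [h4, le_div_iff₀ hsn]
            calc u s ^ p * s ^ ((1:ℝ)+α) / ((N:ℝ)+α) * s ^ ((N:ℝ)-1)
                = u s ^ p * s ^ ((N:ℝ)+α) / ((N:ℝ)+α) := by rw [h5]; ring
            _ ≤ I s := h3
          have h7 : u r ^ p * (r/2) ^ ((1:ℝ)+α) / ((N:ℝ)+α) ≤ u s ^ p * s ^ ((1:ℝ)+α) / ((N:ℝ)+α) := by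
            apply (div_le_div_iff_of_pos_right hK).mpr
            exact mul_le_mul h1 h2 (Real.rpow_nonneg (by linarith) _)
              (Real.rpow_nonneg (hunn s ⟨hs0.le, hs1⟩) _)
          exact h7.trans h6
        have hint : ∫ s in (r/2)..r, (u r ^ p * (r/2) ^ ((1:ℝ)+α) / ((N:ℝ)+α)) ≤ ∫ s in (r/2)..r, w s := by
          apply intervalIntegral.integral_mono_on (by linarith)
            (intervalIntegrable_const) (cw.intervalIntegrable _ _) hptwise
        rw [intervalIntegral.integral_const, smul_eq_mul] at hint
        calc u r ^ p * (r/2) ^ ((1:ℝ)+α) / ((N:ℝ)+α) * (r/2)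
            = (r - r/2) * (u r ^ p * (r/2) ^ ((1:ℝ)+α) / ((N:ℝ)+α)) := by ring
        _ ≤ ∫ s in (r/2)..r, w s := hint
      -- combine
      have hhpos : (0:ℝ) < r/2 := by linarith
      have hrp2 : (0:ℝ) < (r/2) ^ ((1:ℝ)+α) := Real.rpow_pos_of_pos hhpos _
      have hrpN : (0:ℝ) < (r/2) ^ ((N:ℝ)+α) := Real.rpow_pos_of_pos hhpos _
      have hcomb : p * u r ^ (p-1) * (u r ^ p * (r/2) ^ ((1:ℝ)+α) / ((N:ℝ)+α) * (r/2)) * (r/2) ^ ((N:ℝ)+α)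
          ≤ ((N:ℝ)+α) * I r - r ^ ((N:ℝ)+α) * u r ^ p := by
        have h1 : p * u r ^ (p-1) * (u r ^ p * (r/2) ^ ((1:ℝ)+α) / ((N:ℝ)+α) * (r/2))
            ≤ u (r/2) ^ p - u r ^ p := by
          have := mul_le_mul_of_nonneg_left hgap (by positivity : (0:ℝ) ≤ p * u r ^ (p-1))
          linarith [hmvt]
        have h2 := mul_le_mul_of_nonneg_right h1 hrpN.le
        linarith [hstep1]
      -- rewrite powers
      have hup12 : u (1/2) ^ p ≤ u r ^ p :=
        Real.rpow_le_rpow hu21.le (hmono r (1/2) hr0.le hhalf (by norm_num)) hp0.le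
      have hpow : (r/2) ^ ((1:ℝ)+α) * (r/2) * (r/2) ^ ((N:ℝ)+α) = r ^ ((N:ℝ)+2+2*α) / 2 ^ ((N:ℝ)+2+2*α) := by
        rw [← Real.div_rpow hr0.le (by norm_num : (0:ℝ) ≤ 2),
          show ((N:ℝ)+2+2*α) = ((1:ℝ)+α) + 1 + ((N:ℝ)+α) from by ring,
          Real.rpow_add hhpos ((1:ℝ)+α+1) ((N:ℝ)+α),
          Real.rpow_add hhpos ((1:ℝ)+α) 1, Real.rpow_one]
      calc ε1 * (u r ^ (p-1) * r ^ ((N:ℝ)+2+2*α))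
          ≤ c1 * (u r ^ (p-1) * r ^ ((N:ℝ)+2+2*α)) := by
            apply mul_le_mul_of_nonneg_right (min_le_left _ _) (by positivity)
      _ ≤ p * u r ^ (p-1) * (u r ^ p * (r/2) ^ ((1:ℝ)+α) / ((N:ℝ)+α) * (r/2)) * (r/2) ^ ((N:ℝ)+α) := by
            have h2N : (0:ℝ) < 2 ^ ((N:ℝ)+2+2*α) := by positivity
            have hRHS : p * u r ^ (p-1) * (u r ^ p * (r/2) ^ ((1:ℝ)+α) / ((N:ℝ)+α) * (r/2)) * (r/2) ^ ((N:ℝ)+α)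
                = p * u r ^ p / (((N:ℝ)+α) * 2 ^ ((N:ℝ)+2+2*α)) * (u r ^ (p-1) * r ^ ((N:ℝ)+2+2*α)) := by
              calc p * u r ^ (p-1) * (u r ^ p * (r/2) ^ ((1:ℝ)+α) / ((N:ℝ)+α) * (r/2)) * (r/2) ^ ((N:ℝ)+α)
                  = p * u r ^ p / ((N:ℝ)+α) * u r ^ (p-1) * ((r/2) ^ ((1:ℝ)+α) * (r/2) * (r/2) ^ ((N:ℝ)+α)) := by
                    ring
              _ = p * u r ^ p / ((N:ℝ)+α) * u r ^ (p-1) * (r ^ ((N:ℝ)+2+2*α) / 2 ^ ((N:ℝ)+2+2*α)) := by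
                    rw [hpow]
              _ = p * u r ^ p / (((N:ℝ)+α) * 2 ^ ((N:ℝ)+2+2*α)) * (u r ^ (p-1) * r ^ ((N:ℝ)+2+2*α)) := by
                    field_simp
            rw [hRHS, hc1_def]
            apply mul_le_mul_of_nonneg_right _ (by positivity)
            apply (div_le_div_iff_of_pos_right (by positivity)).mpr
            nlinarith [hup12, hp0]
      _ ≤ ((N:ℝ)+α) * I r - r ^ ((N:ℝ)+α) * u r ^ p := hcomb
    · -- case 1/2 < r
      have hsplit := hIsplit (1/4) r
      have hlow4 := hIlow (1/4) ⟨by norm_num, by norm_num⟩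
      have hseg := hIseg (1/4) r (by norm_num) (by linarith) (by linarith)
      have hA : u (1/4) ^ p * (1/4:ℝ) ^ ((N:ℝ)+α) ≤ ((N:ℝ)+α) * I (1/4) := by
        rw [div_le_iff₀ hK] at hlow4; linarith
      have hB : u r ^ p * (r ^ ((N:ℝ)+α) - (1/4:ℝ) ^ ((N:ℝ)+α)) ≤ ((N:ℝ)+α) * ∫ s in (1/4:ℝ)..r, f s := by
        have h2 : u r ^ p * (((r:ℝ) ^ ((N:ℝ)+α) - (1/4:ℝ) ^ ((N:ℝ)+α)) / ((N:ℝ)+α))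
            = u r ^ p * (r ^ ((N:ℝ)+α) - (1/4:ℝ) ^ ((N:ℝ)+α)) / ((N:ℝ)+α) := by ring
        rw [h2, div_le_iff₀ hK] at hseg; linarith
      have hrq : u r ^ p ≤ u (1/2) ^ p :=
        Real.rpow_le_rpow (hunn r ⟨hr0.le, hr1.le⟩)
          (hmono (1/2) r (by norm_num) hhalf.le hr1.le) hp0.le
      have hq14 : (0:ℝ) < (1/4:ℝ) ^ ((N:ℝ)+α) := Real.rpow_pos_of_pos (by norm_num) _
      have hstep1 : (u (1/4) ^ p - u (1/2) ^ p) * (1/4:ℝ) ^ ((N:ℝ)+α)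
          ≤ ((N:ℝ)+α) * I r - r ^ ((N:ℝ)+α) * u r ^ p := by
        rw [hsplit]; nlinarith [hA, hB]
      have hu0p1 : (0:ℝ) < u 0 ^ (p-1) := Real.rpow_pos_of_pos (hupos 0 (by norm_num)) _
      have hb1 : u r ^ (p-1) ≤ u 0 ^ (p-1) :=
        Real.rpow_le_rpow (hunn r ⟨hr0.le, hr1.le⟩)
          (hmono 0 r le_rfl hr0.le hr1.le) hp1.le
      have hb2 : r ^ ((N:ℝ)+2+2*α) ≤ 1 :=
        Real.rpow_le_one hr0.le hr1.le (by linarith)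
      have hrpow_nn : (0:ℝ) ≤ r ^ ((N:ℝ)+2+2*α) := Real.rpow_nonneg hr0.le _
      calc ε1 * (u r ^ (p-1) * r ^ ((N:ℝ)+2+2*α))
          ≤ c2 * (u 0 ^ (p-1) * 1) := by
            apply mul_le_mul (min_le_right _ _) ?_ (by positivity) hc2.le
            exact mul_le_mul hb1 hb2 hrpow_nn hu0p1.le
      _ = (u (1/4) ^ p - u (1/2) ^ p) * (1/4:ℝ) ^ ((N:ℝ)+α) := by
            rw [hc2_def]; field_simp
      _ ≤ ((N:ℝ)+α) * I r - r ^ ((N:ℝ)+α) * u r ^ p := hstep1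
  have hε0eq : ε0 * (p * u 0 ^ p) = ε1 * ((N:ℝ)+1) := by
    rw [hε0_def]; field_simp
  have hstar : ∀ r ∈ Ioo (0:ℝ) 1,
      α * r ^ ((N:ℝ)+α) * u r ^ p + ε0 * p * r ^ ((2:ℝ)+α) * u r ^ (p-1) * I r
        ≤ ((N:ℝ)+1) * I r := by
    intro r hr
    obtain ⟨hr0, hr1⟩ := hr
    have hur : 0 < u r := hupos r ⟨hr0.le, hr1⟩
    have hX : (0:ℝ) < u r ^ (p-1) := Real.rpow_pos_of_pos hur _
    have hU : (0:ℝ) < u r ^ p := Real.rpow_pos_of_pos hur _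
    have hRA : (0:ℝ) < r ^ ((N:ℝ)+α) := Real.rpow_pos_of_pos hr0 _
    have hR2 : (0:ℝ) < r ^ ((2:ℝ)+α) := Real.rpow_pos_of_pos hr0 _
    have hc : r ^ ((N:ℝ)+2+2*α) = r ^ ((2:ℝ)+α) * r ^ ((N:ℝ)+α) := by
      rw [← Real.rpow_add hr0]; congr 1; ring
    have hJr := hJ r ⟨hr0, hr1⟩
    have hIu := hIup r ⟨hr0, hr1.le⟩
    have hIu' : ((N:ℝ)+α) * I r ≤ u 0 ^ p * r ^ ((N:ℝ)+α) := by
      have h := (le_div_iff₀ hK).mp hIu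
      linarith
    have h1 : ε0 * p * r ^ ((2:ℝ)+α) * u r ^ (p-1) * (((N:ℝ)+α) * I r)
        ≤ ε0 * p * r ^ ((2:ℝ)+α) * u r ^ (p-1) * (u 0 ^ p * r ^ ((N:ℝ)+α)) :=
      mul_le_mul_of_nonneg_left hIu' (by positivity)
    have h2 : ε0 * p * r ^ ((2:ℝ)+α) * u r ^ (p-1) * (u 0 ^ p * r ^ ((N:ℝ)+α))
        = ε1 * ((N:ℝ)+1) * (u r ^ (p-1) * r ^ ((N:ℝ)+2+2*α)) := by
      rw [hc]
      linear_combination (r ^ ((2:ℝ)+α) * r ^ ((N:ℝ)+α) * u r ^ (p-1)) * hε0eq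
    have h3 : ((N:ℝ)+1) * (ε1 * (u r ^ (p-1) * r ^ ((N:ℝ)+2+2*α)))
        ≤ ((N:ℝ)+1) * (((N:ℝ)+α) * I r - r ^ ((N:ℝ)+α) * u r ^ p) :=
      mul_le_mul_of_nonneg_left hJr (by linarith)
    have h4 : α * ((N:ℝ)+α) ≤ (N:ℝ)+1 := by nlinarith
    have h5 : α * ((N:ℝ)+α) * (r ^ ((N:ℝ)+α) * u r ^ p) ≤ ((N:ℝ)+1) * (r ^ ((N:ℝ)+α) * u r ^ p) :=
      mul_le_mul_of_nonneg_right h4 (by positivity)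
    rw [← mul_le_mul_iff_of_pos_left hK]
    nlinarith [h1, h2, h3, h5]
  -- the main estimate
  have hMain : ∀ v : ℝ → ℝ, ContDiff ℝ 1 v → v 0 = 0 → v 1 = 0 →
      (1+ε0) * (p * ∫ r in (0:ℝ)..1, r ^ ((N:ℝ) - 1 + α) * u r ^ (p - 1) * v r ^ 2) ≤
        (∫ r in (0:ℝ)..1, r ^ ((N:ℝ) - 1) * (deriv v r) ^ 2)
          + 2 * (N:ℝ) * (∫ r in (0:ℝ)..1, r ^ ((N:ℝ) - 3) * v r ^ 2) :=
    fun v hv hv0 hv1 => mainE N u α p ε0 h3 hα hα1 hp hε0 hdu hddu cdu cddu cu hupos hunn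
      hmono hODE w hw_def hwpos hwlow hwup I hwI hstar v hv hv0 hv1
  -- conclusion
  have hlb : ∀ q ∈ { q : ℝ | ∃ v : ℝ → ℝ, ContDiff ℝ 1 v ∧ v 0 = 0 ∧ v 1 = 0 ∧
      (∫ r in (0:ℝ)..1, r ^ ((N:ℝ) - 1 + α) * u r ^ (p - 1) * v r ^ 2) ≠ 0 ∧
      q = ((∫ r in (0:ℝ)..1, r ^ ((N:ℝ) - 1) * (deriv v r) ^ 2)
            + 2 * (N : ℝ) * (∫ r in (0:ℝ)..1, r ^ ((N:ℝ) - 3) * v r ^ 2))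
          / (p * ∫ r in (0:ℝ)..1, r ^ ((N:ℝ) - 1 + α) * u r ^ (p - 1) * v r ^ 2) },
      1 + ε0 ≤ q := by
    rintro q ⟨v, hv, hv0, hv1, hC, rfl⟩
    have hCnn : 0 ≤ ∫ r in (0:ℝ)..1, r ^ ((N:ℝ) - 1 + α) * u r ^ (p - 1) * v r ^ 2 := by
      apply intervalIntegral.integral_nonneg (by norm_num)
      intro s hs
      have h0 := hunn s hs
      exact mul_nonneg (mul_nonneg (Real.rpow_nonneg hs.1 _) (Real.rpow_nonneg h0 _)) (sq_nonneg _)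
    have hCpos : 0 < ∫ r in (0:ℝ)..1, r ^ ((N:ℝ) - 1 + α) * u r ^ (p - 1) * v r ^ 2 :=
      lt_of_le_of_ne hCnn (Ne.symm hC)
    rw [le_div_iff₀ (by positivity)]
    calc (1 + ε0) * (p * ∫ r in (0:ℝ)..1, r ^ ((N:ℝ) - 1 + α) * u r ^ (p - 1) * v r ^ 2)
        ≤ _ := hMain v hv hv0 hv1
    _ = _ := by ring
  have hmem : ∃ q₀ : ℝ, q₀ ∈ { q : ℝ | ∃ v : ℝ → ℝ, ContDiff ℝ 1 v ∧ v 0 = 0 ∧ v 1 = 0 ∧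
      (∫ r in (0:ℝ)..1, r ^ ((N:ℝ) - 1 + α) * u r ^ (p - 1) * v r ^ 2) ≠ 0 ∧
      q = ((∫ r in (0:ℝ)..1, r ^ ((N:ℝ) - 1) * (deriv v r) ^ 2)
            + 2 * (N : ℝ) * (∫ r in (0:ℝ)..1, r ^ ((N:ℝ) - 3) * v r ^ 2))
          / (p * ∫ r in (0:ℝ)..1, r ^ ((N:ℝ) - 1 + α) * u r ^ (p - 1) * v r ^ 2) } := by
    set v₀ : ℝ → ℝ := fun r => r * (1 - r) with hv₀_def
    have hv₀ : ContDiff ℝ 1 v₀ := by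
      apply ContDiff.mul contDiff_id
      exact ContDiff.sub contDiff_const contDiff_id
    have hCne : (∫ r in (0:ℝ)..1, r ^ ((N:ℝ) - 1 + α) * u r ^ (p - 1) * v₀ r ^ 2) ≠ 0 := by
      have : 0 < ∫ r in (0:ℝ)..1, r ^ ((N:ℝ) - 1 + α) * u r ^ (p - 1) * v₀ r ^ 2 := by
        apply intervalIntegral.intervalIntegral_pos_of_pos_on
        · exact Continuous.intervalIntegrable (by
            exact ((aux_cont_rpow (by linarith)).mul cupow1).mul ((hv₀.continuous).pow 2)) _ _
        · intro s hs
          have hus : 0 < u s := hupos s ⟨hs.1.le, hs.2⟩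
          have h1 : 0 < s ^ ((N:ℝ)-1+α) := Real.rpow_pos_of_pos hs.1 _
          have h2 : 0 < u s ^ (p-1) := Real.rpow_pos_of_pos hus _
          have h3 : 0 < v₀ s ^ 2 := by
            have : v₀ s ≠ 0 := by
              simp only [hv₀_def]
              exact mul_ne_zero (ne_of_gt hs.1) (ne_of_gt (by linarith [hs.2] : (0:ℝ) < 1 - s))
            positivity
          positivity
        · norm_num
      exact this.ne'
    exact ⟨_, v₀, hv₀, by simp [hv₀_def], by simp [hv₀_def], hCne, rfl⟩
  obtain ⟨q₀, hq₀⟩ := hmem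
  have := le_csInf ⟨q₀, hq₀⟩ hlb
  linarith
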